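/- Let A be a closed symmetric relation in 𝔥 and Π₋ = {𝓗₀ ⊕ 𝓗₁, Γ₀, Γ₁} a boundary triplet for A*, where 𝓗₁ ⊆ 𝓗₀, Γⱼ : A* → 𝓗ⱼ, the map Γ = (Γ₀, Γ₁) : A* → 𝓗₀ ⊕ 𝓗₁ is surjective, and the Green's identity ⟨f',g⟩ − ⟨f,g'⟩ = ⟨Γ₁f̂, Γ₀ĝ⟩ − ⟨Γ₀f̂, Γ₁ĝ⟩ − i⟨P₂Γ₀f̂, P₂Γ₀ĝ⟩ holds for all f̂ = (f,f'), ĝ = (g,g') ∈ A*, with P₂ the projection onto 𝓗₂ = 𝓗₀ ⊖ 𝓗₁. Then ker Γ₀ ∩ ker Γ₁ = A. -/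

import Mathlib

/- STATEMENT 6: for a boundary triplet `Π₋ = {𝓗₀ ⊕ 𝓗₁, Γ₀, Γ₁}` for `A*`,
one has `ker Γ₀ ∩ ker Γ₁ = A`.
(The inner product `⟪·,·⟫` is conjugate-linear in the first argument; the paper's
pairing `(x,y)` corresponds to `⟪y,x⟫` and the Green identity is stated accordingly.) -/

open scoped ComplexInnerProductSpace

set_option synthInstance.maxHeartbeats 1000000

/-- The adjoint of a linear relation `T` in `𝔥`. -/
def adjRel {𝔥 : Type*} [NormedAddCommGroup 𝔥] [InnerProductSpace ℂ 𝔥]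
    (T : Submodule ℂ (𝔥 × 𝔥)) : Submodule ℂ (𝔥 × 𝔥) where
  carrier := {p | ∀ q ∈ T, ⟪p.2, q.1⟫ = ⟪p.1, q.2⟫}
  add_mem' := by
    intro a b ha hb q hq
    show ⟪a.2 + b.2, q.1⟫ = ⟪a.1 + b.1, q.2⟫
    rw [inner_add_left, inner_add_left, ha q hq, hb q hq]
  zero_mem' := by
    intro q hq
    show ⟪(0 : 𝔥), q.1⟫ = ⟪(0 : 𝔥), q.2⟫
    simp
  smul_mem' := by
    intro c a ha q hq
    show ⟪c • a.2, q.1⟫ = ⟪c • a.1, q.2⟫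
    rw [inner_smul_left, inner_smul_left, ha q hq]

variable {𝔥 𝓗₀ : Type*} [NormedAddCommGroup 𝔥] [InnerProductSpace ℂ 𝔥] [CompleteSpace 𝔥]
  [NormedAddCommGroup 𝓗₀] [InnerProductSpace ℂ 𝓗₀] [CompleteSpace 𝓗₀]

theorem statement6
    (A : Submodule ℂ (𝔥 × 𝔥)) (hA : IsClosed (A : Set (𝔥 × 𝔥))) (hsym : A ≤ adjRel A)
    (𝓗₁ : Submodule ℂ 𝓗₀) (hcl : IsClosed (𝓗₁ : Set 𝓗₀))
    (Γ₀ : ↥(adjRel A) →ₗ[ℂ] 𝓗₀) (Γ₁ : ↥(adjRel A) →ₗ[ℂ] ↥𝓗₁)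
    (hsurj : Function.Surjective (fun f : ↥(adjRel A) => (Γ₀ f, Γ₁ f)))
    (hGreen : ∀ f g : ↥(adjRel A),
      ⟪(g : 𝔥 × 𝔥).1, (f : 𝔥 × 𝔥).2⟫ - ⟪(g : 𝔥 × 𝔥).2, (f : 𝔥 × 𝔥).1⟫ =
        ⟪Γ₀ g, (Γ₁ f : 𝓗₀)⟫ - ⟪(Γ₁ g : 𝓗₀), Γ₀ f⟫ -
          Complex.I * ⟪((Submodule.orthogonalProjectionOnto (𝓗₁ᗮ) (Γ₀ g) : ↥(𝓗₁ᗮ)) : 𝓗₀),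
            ((Submodule.orthogonalProjectionOnto (𝓗₁ᗮ) (Γ₀ f) : ↥(𝓗₁ᗮ)) : 𝓗₀)⟫) :
    ∀ f : ↥(adjRel A), (Γ₀ f = 0 ∧ Γ₁ f = 0) ↔ (f : 𝔥 × 𝔥) ∈ A := by
  haveI : CompleteSpace 𝓗₁ := hcl.completeSpace_coe
  haveI : CompleteSpace A := hA.completeSpace_coe
  intro f
  constructor
  · rintro ⟨h0, h1⟩
    -- work in the L² product space
    set e : WithLp 2 (𝔥 × 𝔥) ≃L[ℂ] 𝔥 × 𝔥 := WithLp.prodContinuousLinearEquiv 2 ℂ 𝔥 𝔥 with he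
    set A' : Submodule ℂ (WithLp 2 (𝔥 × 𝔥)) :=
      A.comap (e.toLinearEquiv : WithLp 2 (𝔥 × 𝔥) →ₗ[ℂ] 𝔥 × 𝔥) with hA'def
    have hA' : IsClosed (A' : Set (WithLp 2 (𝔥 × 𝔥))) := hA.preimage e.continuous
    haveI : CompleteSpace A' := hA'.completeSpace_coe
    have hAA : A'ᗮᗮ = A' := Submodule.orthogonal_orthogonal A'
    have hmem : e.symm (f : 𝔥 × 𝔥) ∈ A'ᗮᗮ := by
      rw [Submodule.mem_orthogonal]
      intro v hv
      -- g := (-v.2, v.1) ∈ adjRel A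
      have hg : (((-(e v).2, (e v).1)) : 𝔥 × 𝔥) ∈ adjRel A := by
        intro q hq
        have hq' : e.symm q ∈ A' := by
          simp only [hA'def, Submodule.mem_comap]
          simpa using hq
        have h := (Submodule.mem_orthogonal A' v).mp hv (e.symm q) hq'
        have h' : ⟪(e v).1, q.1⟫ + ⟪(e v).2, q.2⟫ = 0 := by
          have hc := congrArg (starRingEnd ℂ) h
          rw [WithLp.prod_inner_apply] at hc
          simp only [map_add, inner_conj_symm, map_zero] at hc
          exact hc
        show ⟪(e v).1, q.1⟫ = ⟪-(e v).2, q.2⟫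
        rw [inner_neg_left]
        linear_combination h'
      have key := hGreen f ⟨(-(e v).2, (e v).1), hg⟩
      rw [h0, h1] at key
      simp only [Submodule.coe_zero, inner_zero_right, inner_zero_left, map_zero, sub_zero,
        mul_zero, zero_sub, neg_eq_zero] at key
      have key' : ⟪(-(e v).2 : 𝔥), (f : 𝔥 × 𝔥).2⟫ - ⟪(e v).1, (f : 𝔥 × 𝔥).1⟫ = 0 := by
        rw [key]
      rw [inner_neg_left] at key'
      show ⟪v, e.symm (f : 𝔥 × 𝔥)⟫ = 0
      rw [WithLp.prod_inner_apply]
      show ⟪(e v).1, (f : 𝔥 × 𝔥).1⟫ + ⟪(e v).2, (f : 𝔥 × 𝔥).2⟫ = 0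
      linear_combination -key'
    rw [hAA] at hmem
    have : e (e.symm (f : 𝔥 × 𝔥)) ∈ A := hmem
    simpa using this
  · intro hf
    -- LHS of Green vanishes for any g ∈ adjRel A
    have hLHS : ∀ g : ↥(adjRel A),
        ⟪(g : 𝔥 × 𝔥).1, (f : 𝔥 × 𝔥).2⟫ - ⟪(g : 𝔥 × 𝔥).2, (f : 𝔥 × 𝔥).1⟫ = 0 := by
      intro g
      have := g.2 (f : 𝔥 × 𝔥) hf
      rw [this]; ring
    -- Step 1: Γ₁ f = 0
    obtain ⟨g₁, hg₁⟩ := hsurj (((Γ₁ f : 𝓗₀)), 0)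
    have hg₁0 : Γ₀ g₁ = (Γ₁ f : 𝓗₀) := congrArg Prod.fst hg₁
    have hg₁1 : Γ₁ g₁ = 0 := congrArg Prod.snd hg₁
    have hP2 : Submodule.orthogonalProjectionOnto (𝓗₁ᗮ) ((Γ₁ f : 𝓗₀)) = 0 :=
      Submodule.orthogonalProjectionOnto_apply_of_mem_orthogonal
        (Submodule.le_orthogonal_orthogonal 𝓗₁ (Γ₁ f).2)
    have k1 := hGreen f g₁
    rw [hLHS g₁, hg₁0, hg₁1, hP2] at k1
    simp only [Submodule.coe_zero, inner_zero_left, sub_zero, mul_zero] at k1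
    have h1 : Γ₁ f = 0 := by
      have : ⟪(Γ₁ f : 𝓗₀), (Γ₁ f : 𝓗₀)⟫ = 0 := k1.symm
      rw [inner_self_eq_zero] at this
      exact Subtype.ext this
    -- Step 2: P₁ (Γ₀ f) = 0
    obtain ⟨g₂, hg₂⟩ := hsurj (0, Submodule.orthogonalProjectionOnto 𝓗₁ (Γ₀ f))
    have hg₂0 : Γ₀ g₂ = 0 := congrArg Prod.fst hg₂
    have hg₂1 : Γ₁ g₂ = Submodule.orthogonalProjectionOnto 𝓗₁ (Γ₀ f) := congrArg Prod.snd hg₂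
    have k2 := hGreen f g₂
    rw [hLHS g₂, hg₂0, hg₂1, h1] at k2
    simp only [Submodule.coe_zero, inner_zero_right, inner_zero_left, map_zero, zero_sub,
      mul_zero, sub_zero] at k2
    have hP1 : (Submodule.orthogonalProjectionOnto 𝓗₁ (Γ₀ f) : 𝓗₀) = 0 := by
      have hsub : Γ₀ f - ((Submodule.orthogonalProjectionOnto 𝓗₁ (Γ₀ f) : 𝓗₀)) ∈ 𝓗₁ᗮ :=
          Submodule.sub_starProjection_mem_orthogonal (K := 𝓗₁) (Γ₀ f)
      have hinner : ⟪((Submodule.orthogonalProjectionOnto 𝓗₁ (Γ₀ f) : 𝓗₀)), Γ₀ f⟫ =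
          ⟪((Submodule.orthogonalProjectionOnto 𝓗₁ (Γ₀ f) : 𝓗₀)), ((Submodule.orthogonalProjectionOnto 𝓗₁ (Γ₀ f) : 𝓗₀))⟫ := by
        have hz0 : ⟪((Submodule.orthogonalProjectionOnto 𝓗₁ (Γ₀ f) : 𝓗₀)),
            Γ₀ f - ((Submodule.orthogonalProjectionOnto 𝓗₁ (Γ₀ f) : 𝓗₀))⟫ = 0 :=
          Submodule.inner_right_of_mem_orthogonal (Submodule.orthogonalProjectionOnto 𝓗₁ (Γ₀ f)).2 hsub
        rw [inner_sub_right] at hz0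
        linear_combination hz0
      have hz : ⟪((Submodule.orthogonalProjectionOnto 𝓗₁ (Γ₀ f) : 𝓗₀)), Γ₀ f⟫ = 0 := by
        linear_combination k2
      rw [hinner] at hz
      rwa [inner_self_eq_zero] at hz
    -- Step 3: P₂ (Γ₀ f) = 0
    obtain ⟨g₃, hg₃⟩ := hsurj (Γ₀ f, 0)
    have hg₃0 : Γ₀ g₃ = Γ₀ f := congrArg Prod.fst hg₃
    have hg₃1 : Γ₁ g₃ = 0 := congrArg Prod.snd hg₃
    have k3 := hGreen f g₃
    rw [hLHS g₃, hg₃0, hg₃1, h1] at k3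
    simp only [Submodule.coe_zero, inner_zero_right, inner_zero_left, sub_zero, zero_sub] at k3
    have hP2' : (Submodule.orthogonalProjectionOnto (𝓗₁ᗮ) (Γ₀ f) : 𝓗₀) = 0 := by
      have hz : Complex.I * ⟪((Submodule.orthogonalProjectionOnto (𝓗₁ᗮ) (Γ₀ f) : 𝓗₀)),
          ((Submodule.orthogonalProjectionOnto (𝓗₁ᗮ) (Γ₀ f) : 𝓗₀))⟫ = 0 := by
        linear_combination k3
      rcases mul_eq_zero.mp hz with h | h
      · exact absurd h Complex.I_ne_zero
      · rwa [inner_self_eq_zero] at h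
    have h0 : Γ₀ f = 0 := by
      have : ((Submodule.orthogonalProjectionOnto 𝓗₁ (Γ₀ f) : 𝓗₀)) + ((Submodule.orthogonalProjectionOnto (𝓗₁ᗮ) (Γ₀ f) : 𝓗₀)) = Γ₀ f :=
        Submodule.starProjection_add_starProjection_orthogonal (K := 𝓗₁) (Γ₀ f)
      rw [hP1, hP2', add_zero] at this
      exact this.symm
    exact ⟨h0, h1⟩
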